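/- Let μ > 0, 0 < ν < 1 and 0 < p < 1 be real numbers, set y_m := ⌊μ/(1−p)^(1/ν)⌋ and B := (1/p) · μ^(ν·y_m) / ((1−p)^(y_m) · (y_m!)^ν). Then for every natural number y, (μ^y / y!)^ν ≤ B · p(1−p)^y. In other words, the unnormalised COM-Poisson mass function with parameters (μ, ν) is dominated by B times the geometric(p) mass function. -/

import Mathlib

private lemma step_up (c : ℝ) (hc : 0 ≤ c) (n : ℕ) (h : ((n:ℝ)+1) ≤ c) :
    c ^ n / (Nat.factorial n : ℝ) ≤ c ^ (n+1) / (Nat.factorial (n+1) : ℝ) := by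
  have hf : (0:ℝ) < (Nat.factorial n : ℝ) := by exact_mod_cast n.factorial_pos
  have hf' : (0:ℝ) < (Nat.factorial (n+1) : ℝ) := by exact_mod_cast (n+1).factorial_pos
  rw [div_le_div_iff₀ hf hf', Nat.factorial_succ, pow_succ]
  push_cast
  have hcn : (0:ℝ) ≤ c ^ n := pow_nonneg hc n
  have := mul_le_mul_of_nonneg_left h (mul_nonneg hcn hf.le)
  nlinarith [this]

private lemma step_down (c : ℝ) (hc : 0 ≤ c) (n : ℕ) (h : c ≤ ((n:ℝ)+1)) :
    c ^ (n+1) / (Nat.factorial (n+1) : ℝ) ≤ c ^ n / (Nat.factorial n : ℝ) := by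
  have hf : (0:ℝ) < (Nat.factorial n : ℝ) := by exact_mod_cast n.factorial_pos
  have hf' : (0:ℝ) < (Nat.factorial (n+1) : ℝ) := by exact_mod_cast (n+1).factorial_pos
  rw [div_le_div_iff₀ hf' hf, Nat.factorial_succ, pow_succ]
  push_cast
  have hcn : (0:ℝ) ≤ c ^ n := pow_nonneg hc n
  have := mul_le_mul_of_nonneg_left h (mul_nonneg hcn hf.le)
  nlinarith [this]

private lemma poisson_max (c : ℝ) (hc : 0 < c) (y : ℕ) :
    c ^ y / (Nat.factorial y : ℝ) ≤ c ^ ⌊c⌋₊ / (Nat.factorial ⌊c⌋₊ : ℝ) := by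
  set m := ⌊c⌋₊ with hm
  have hmc : (m : ℝ) ≤ c := Nat.floor_le hc.le
  have hcm : c < (m : ℝ) + 1 := Nat.lt_floor_add_one c
  rcases le_total y m with h | h
  · -- increasing part
    have key : ∀ n : ℕ, (n:ℝ) ≤ c → ∀ k, k ≤ n →
        c ^ k / (Nat.factorial k : ℝ) ≤ c ^ n / (Nat.factorial n : ℝ) := by
      intro n
      induction n with
      | zero => intro _ k hk; interval_cases k; exact le_rfl
      | succ n ih =>
        intro hn k hk
        rcases Nat.eq_or_lt_of_le hk with rfl | hk'
        · exact le_rfl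
        · have hk'' : k ≤ n := Nat.lt_succ_iff.mp hk'
          have hn' : (n:ℝ) ≤ c := by push_cast at hn ⊢; linarith
          exact (ih hn' k hk'').trans
            (step_up c hc.le n (by push_cast at hn ⊢; linarith))
    exact key m hmc y h
  · -- decreasing part
    have dec : ∀ d : ℕ, c ^ (m + d) / (Nat.factorial (m + d) : ℝ)
        ≤ c ^ m / (Nat.factorial m : ℝ) := by
      intro d
      induction d with
      | zero => simp
      | succ d ih =>
        have step : c ^ (m + d + 1) / (Nat.factorial (m + d + 1) : ℝ)
            ≤ c ^ (m + d) / (Nat.factorial (m + d) : ℝ) := by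
          apply step_down c hc.le
          push_cast
          linarith [Nat.cast_nonneg (α := ℝ) d]
        have heq : m + (d + 1) = (m + d) + 1 := by ring
        rw [heq]
        exact le_trans step ih
    obtain ⟨d, rfl⟩ := Nat.exists_eq_add_of_le h
    exact dec d

private lemma conv (μ ν a : ℝ) (hμ : 0 < μ) (hν : 0 < ν) (ha : 0 < a) (n : ℕ) :
    ((μ / a ^ (1/ν)) ^ n / (Nat.factorial n : ℝ)) ^ ν
      = μ ^ (ν * (n:ℝ)) / (a ^ n * (Nat.factorial n : ℝ) ^ ν) := by
  have hb : (0:ℝ) < a ^ (1/ν) := Real.rpow_pos_of_pos ha _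
  have hf : (0:ℝ) < (Nat.factorial n : ℝ) := by exact_mod_cast n.factorial_pos
  have h2 : (a ^ (1/ν)) ^ n = a ^ ((n:ℝ)/ν) := by
    rw [← Real.rpow_natCast (a ^ (1/ν)) n, ← Real.rpow_mul ha.le]
    ring_nf
  have hc : (0:ℝ) < μ / a ^ (1/ν) := div_pos hμ hb
  rw [div_pow, h2]
  rw [div_div, Real.div_rpow (pow_nonneg hμ.le n) (by positivity),
    Real.mul_rpow (by positivity) hf.le,
    ← Real.rpow_natCast μ n, ← Real.rpow_mul hμ.le,
    ← Real.rpow_mul ha.le]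
  have : (n:ℝ)/ν*ν = (n:ℝ) := by field_simp
  rw [this, Real.rpow_natCast, mul_comm (n:ℝ) ν]

theorem stmt_6 (μ ν p : ℝ) (hμ : 0 < μ) (hν0 : 0 < ν) (hν1 : ν < 1)
    (hp0 : 0 < p) (hp1 : p < 1)
    (ym : ℕ) (hym : ym = ⌊μ / (1 - p) ^ (1 / ν)⌋₊)
    (B : ℝ)
    (hB : B = (1 / p) * (μ ^ (ν * (ym : ℝ)) /
      ((1 - p) ^ ym * (Nat.factorial ym : ℝ) ^ ν)))
    (y : ℕ) :
    (μ ^ y / (Nat.factorial y : ℝ)) ^ ν ≤ B * (p * (1 - p) ^ y) := by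
  have ha : (0:ℝ) < 1 - p := by linarith
  set c : ℝ := μ / (1 - p) ^ (1/ν) with hc
  have hcpos : 0 < c := div_pos hμ (Real.rpow_pos_of_pos ha _)
  have key := poisson_max c hcpos y
  rw [← hym] at key
  -- raise to power ν
  have hfy : (0:ℝ) < (Nat.factorial y : ℝ) := by exact_mod_cast y.factorial_pos
  have hfm : (0:ℝ) < (Nat.factorial ym : ℝ) := by exact_mod_cast ym.factorial_pos
  have key2 : (c ^ y / (Nat.factorial y : ℝ)) ^ ν
      ≤ (c ^ ym / (Nat.factorial ym : ℝ)) ^ ν :=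
    Real.rpow_le_rpow (by positivity) key hν0.le
  rw [conv μ ν (1-p) hμ hν0 ha y, conv μ ν (1-p) hμ hν0 ha ym] at key2
  have hrhs : B * (p * (1 - p) ^ y)
      = μ ^ (ν * (ym:ℝ)) / ((1 - p) ^ ym * (Nat.factorial ym : ℝ) ^ ν) * (1 - p) ^ y := by
    rw [hB]; field_simp
  rw [hrhs]
  have hlhs : (μ ^ y / (Nat.factorial y : ℝ)) ^ ν
      = μ ^ (ν * (y:ℝ)) / ((1 - p) ^ y * (Nat.factorial y : ℝ) ^ ν) * (1 - p) ^ y := by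
    rw [Real.div_rpow (pow_nonneg hμ.le y) hfy.le,
      ← Real.rpow_natCast μ y, ← Real.rpow_mul hμ.le, mul_comm (y:ℝ) ν]
    have h1 : (0:ℝ) < (1 - p) ^ y := pow_pos ha y
    field_simp
  rw [hlhs]
  exact mul_le_mul_of_nonneg_right key2 (pow_nonneg ha.le y)
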